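/- Let ω be a non-negative integrable function on the interval (a,b) with ∫_a^b ω(y) dy = 1 and with y^k ω(y) integrable on (a,b) for every k ≥ 0, and let L_ω[f] = ∫_a^b f(y) ω(y) dy. Assume 1 ∉ (a,b), and let (P_n)_{n≥0} be a sequence of real polynomials with deg P_n = n that is orthogonal with respect to the functional L_{(y−1)ω}[f] = ∫_a^b f(y)(y−1)ω(y) dy and satisfies L_ω[P_n] = 1 for all n. Then ∫_a^b P_n(y) P_n(x·y) ω(y) dy = P_n(x) for all real x and every n. -/

import Mathlib

open MeasureTheory Set

open Polynomial in
private lemma integrable_poly_mul_aux (a b : ℝ) (ω : ℝ → ℝ)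
    (h_moments : ∀ k : ℕ, IntegrableOn (fun y => y ^ k * ω y) (Ioo a b))
    (f : Polynomial ℝ) : IntegrableOn (fun y => f.eval y * ω y) (Ioo a b) := by
  have h : (fun y => f.eval y * ω y) =
      fun y => ∑ k ∈ Finset.range (f.natDegree + 1), f.coeff k * (y ^ k * ω y) := by
    funext y
    rw [Polynomial.eval_eq_sum_range, Finset.sum_mul]
    simp [mul_assoc]
  rw [h]
  exact integrable_finset_sum _ fun k _ => (h_moments k).const_mul _

open Polynomial in
private lemma span_poly_aux (P : ℕ → Polynomial ℝ)
    (hdeg : ∀ n, (P n).natDegree = n) (hP0 : P 0 ≠ 0) :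
    ∀ d (q : Polynomial ℝ), q.natDegree ≤ d →
      q ∈ Submodule.span ℝ (P '' Set.Iic d) := by
  have hPne : ∀ n, P n ≠ 0 := by
    intro n
    cases n with
    | zero => exact hP0
    | succ k =>
      intro h
      have := hdeg (k + 1)
      rw [h] at this
      simp at this
  have hlead : ∀ n, (P n).coeff n ≠ 0 := by
    intro n
    have : (P n).coeff n = (P n).leadingCoeff := by
      rw [Polynomial.leadingCoeff, hdeg n]
    rw [this]
    exact Polynomial.leadingCoeff_ne_zero.mpr (hPne n)
  intro d
  induction d with
  | zero =>
    intro q hq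
    have hq0 : q = Polynomial.C (q.coeff 0) := Polynomial.eq_C_of_natDegree_le_zero hq
    have hP00 : P 0 = Polynomial.C ((P 0).coeff 0) :=
      Polynomial.eq_C_of_natDegree_le_zero (le_of_eq (hdeg 0))
    have : q = (q.coeff 0 / (P 0).coeff 0) • P 0 := by
      rw [Polynomial.smul_eq_C_mul]
      nth_rewrite 1 [hq0]
      nth_rewrite 2 [hP00]
      rw [← Polynomial.C_mul, div_mul_cancel₀ _ (hlead 0)]
    rw [this]
    exact Submodule.smul_mem _ _ (Submodule.subset_span ⟨0, by simp, rfl⟩)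
  | succ d ih =>
    intro q hq
    have hmono : Submodule.span ℝ (P '' Set.Iic d) ≤
        Submodule.span ℝ (P '' Set.Iic (d + 1)) :=
      Submodule.span_mono (Set.image_mono (Set.Iic_subset_Iic.mpr (Nat.le_succ d)))
    set c := q.coeff (d + 1) / (P (d + 1)).coeff (d + 1) with hc
    have hr : (q - c • P (d + 1)).natDegree ≤ d := by
      rw [Polynomial.natDegree_le_iff_coeff_eq_zero]
      intro m hm
      rw [Polynomial.coeff_sub, Polynomial.coeff_smul, smul_eq_mul]
      rcases eq_or_lt_of_le (Nat.succ_le_of_lt hm) with h | h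
      · rw [← h, hc, div_mul_cancel₀ _ (hlead (d + 1)), sub_self]
      · have h1 : q.coeff m = 0 :=
          Polynomial.coeff_eq_zero_of_natDegree_lt (lt_of_le_of_lt hq h)
        have h2 : (P (d + 1)).coeff m = 0 :=
          Polynomial.coeff_eq_zero_of_natDegree_lt (by rw [hdeg]; exact h)
        rw [h1, h2, mul_zero, sub_zero]
    have : q = c • P (d + 1) + (q - c • P (d + 1)) := by ring
    rw [this]
    exact Submodule.add_mem _
      (Submodule.smul_mem _ _ (Submodule.subset_span ⟨d + 1, by simp, rfl⟩))
      (hmono (ih _ hr))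

/-- Special case `ζ = 1, τ = 0, σ = 1` of Theorem 3 (the Bender–Ben-Naim equation
`∫ P(y) P(xy) ω(y) dy = P(x)`): if `1 ∉ (a,b)`, an OPS for `L_{(y-1)ω}` normalized by
`L_ω[Pₙ] = 1` solves `∫ Pₙ(y) Pₙ(xy) ω(y) dy = Pₙ(x)`. -/
theorem OPS_solves_multiplicative_integral_eq (a b : ℝ) (ω : ℝ → ℝ)
    (hω_nonneg : ∀ y ∈ Ioo a b, 0 ≤ ω y)
    (hω_int : IntegrableOn ω (Ioo a b))
    (hω_norm : (∫ y in Ioo a b, ω y) = 1)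
    (h_moments : ∀ k : ℕ, IntegrableOn (fun y => y ^ k * ω y) (Ioo a b))
    (hone : (1 : ℝ) ∉ Ioo a b)
    (P : ℕ → Polynomial ℝ)
    (hdeg : ∀ n, (P n).natDegree = n)
    (horth : ∀ n m, n ≠ m →
      (∫ y in Ioo a b, (P n).eval y * (P m).eval y * (y - 1) * ω y) = 0)
    (hne : ∀ n, (∫ y in Ioo a b, ((P n).eval y) ^ 2 * (y - 1) * ω y) ≠ 0)
    (hnorm : ∀ n, (∫ y in Ioo a b, (P n).eval y * ω y) = 1) :
    ∀ (n : ℕ) (x : ℝ),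
      (∫ y in Ioo a b, (P n).eval y * (P n).eval (x * y) * ω y) = (P n).eval x := by
  -- integrability of polynomial × ω
  have hint : ∀ f : Polynomial ℝ, IntegrableOn (fun y => f.eval y * ω y) (Ioo a b) :=
    integrable_poly_mul_aux a b ω h_moments
  -- P 0 ≠ 0
  have hP0 : P 0 ≠ 0 := by
    intro h
    have := hnorm 0
    rw [h] at this
    norm_num at this
  intro n x
  -- orthogonality against all polynomials of degree < n
  have horth' : ∀ q : Polynomial ℝ, q.natDegree < n →
      (∫ y in Ioo a b, ((P n * q * (Polynomial.X - 1)).eval y) * ω y) = 0 := by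
    intro q hq
    obtain ⟨d, hd⟩ : ∃ d, n = d + 1 := ⟨n - 1, by omega⟩
    have hmem : q ∈ Submodule.span ℝ (P '' Set.Iic d) :=
      span_poly_aux P hdeg hP0 d q (by omega)
    clear hq
    induction hmem using Submodule.span_induction with
    | mem p hp =>
      obtain ⟨m, hm, rfl⟩ := hp
      simp only [Set.mem_Iic] at hm
      have := horth n m (by omega)
      rw [← this]
      congr 1
      funext y
      simp only [Polynomial.eval_mul, Polynomial.eval_sub, Polynomial.eval_X,
        Polynomial.eval_one]
      try ring
    | zero => simp
    | add p r hp hr ihp ihr =>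
      have key : (fun y => ((P n * (p + r) * (Polynomial.X - 1)).eval y) * ω y) =
          fun y => ((P n * p * (Polynomial.X - 1)).eval y) * ω y +
            ((P n * r * (Polynomial.X - 1)).eval y) * ω y := by
        funext y
        simp [Polynomial.eval_mul, Polynomial.eval_add, Polynomial.eval_sub]
        ring
      rw [key, integral_add (hint _) (hint _), ihp, ihr, add_zero]
    | smul c p hp ihp =>
      have key : (fun y => ((P n * (c • p) * (Polynomial.X - 1)).eval y) * ω y) =
          (fun y => c * (((P n * p * (Polynomial.X - 1)).eval y) * ω y)) := by
        funext y
        simp [Polynomial.eval_mul, Polynomial.eval_smul, Polynomial.eval_sub]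
        ring
      rw [key, integral_const_mul, ihp, mul_zero]
  -- moments of P n are all 1 up to degree n
  have hm1 : ∀ k ≤ n, (∫ y in Ioo a b, (P n).eval y * y ^ k * ω y) = 1 := by
    intro k hk
    induction k with
    | zero => simpa using hnorm n
    | succ k ih =>
      have hk' : k < n := by omega
      have h0 := horth' (Polynomial.X ^ k) (by simpa using hk')
      have hsub : (fun y => ((P n * Polynomial.X ^ k * (Polynomial.X - 1)).eval y) * ω y) =
          fun y => (P n).eval y * y ^ (k + 1) * ω y -
            (P n).eval y * y ^ k * ω y := by
        funext y
        simp [Polynomial.eval_mul, Polynomial.eval_sub, Polynomial.eval_pow]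
        ring
      have hi1 : IntegrableOn (fun y => (P n).eval y * y ^ (k + 1) * ω y) (Ioo a b) := by
        have := hint (P n * Polynomial.X ^ (k + 1))
        convert this using 2 with y
        · rfl
        simp [Polynomial.eval_mul, Polynomial.eval_pow, mul_assoc]
      have hi2 : IntegrableOn (fun y => (P n).eval y * y ^ k * ω y) (Ioo a b) := by
        have := hint (P n * Polynomial.X ^ k)
        convert this using 2 with y
        · rfl
        simp [Polynomial.eval_mul, Polynomial.eval_pow, mul_assoc]
      rw [hsub, integral_sub hi1 hi2, ih (by omega)] at h0
      linarith
  -- main computation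
  have hexp : (fun y => (P n).eval y * (P n).eval (x * y) * ω y) =
      fun y => ∑ k ∈ Finset.range (n + 1),
        (P n).coeff k * x ^ k * ((P n).eval y * y ^ k * ω y) := by
    funext y
    rw [Polynomial.eval_eq_sum_range' (n := n + 1) (by rw [hdeg]; omega) (x * y)]
    rw [Finset.mul_sum, Finset.sum_mul]
    congr 1
    funext k
    ring
  rw [hexp, integral_finset_sum]
  · have : ∀ k ∈ Finset.range (n + 1),
        (∫ y in Ioo a b, (P n).coeff k * x ^ k * ((P n).eval y * y ^ k * ω y)) =
        (P n).coeff k * x ^ k := by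
      intro k hk
      rw [integral_const_mul, hm1 k (by simpa using Nat.lt_succ_iff.mp (Finset.mem_range.mp hk)),
        mul_one]
    rw [Finset.sum_congr rfl this]
    rw [Polynomial.eval_eq_sum_range' (n := n + 1) (by rw [hdeg]; omega) x]
  · intro k _
    have : (fun y => (P n).coeff k * x ^ k * ((P n).eval y * y ^ k * ω y)) =
        fun y => ((P n).coeff k * x ^ k) * (((P n * Polynomial.X ^ k).eval y) * ω y) := by
      funext y
      simp [Polynomial.eval_mul, Polynomial.eval_pow, mul_assoc]
    rw [this]
    exact (hint _).const_mul _
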